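/- Let W be a 3-dimensional complex vector space and let γ be a nonzero complex alternating 3-form on W (i.e. ℂ-trilinear and alternating). Then the real alternating 3-forms Re∘γ and Im∘γ on the underlying 6-dimensional real vector space of W are both multisymplectic. -/

import Mathlib

open scoped TensorProduct

/-- The wedge product of real-valued alternating forms
(antisymmetrized shuffle-sum convention, via `AlternatingMap.domCoprod`). -/
noncomputable def wedge {V : Type*} [AddCommGroup V] [Module ℝ V] {p q : ℕ}
    (α : V [⋀^Fin p]→ₗ[ℝ] ℝ) (β : V [⋀^Fin q]→ₗ[ℝ] ℝ) : V [⋀^Fin (p + q)]→ₗ[ℝ] ℝ :=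
  ((LinearMap.mul' ℝ ℝ).compAlternatingMap (α.domCoprod β)).domDomCongr finSumFinEquiv

/-- The interior product `ι_v ω = ω(v, ·, …, ·)`. -/
noncomputable def iota {V : Type*} [AddCommGroup V] [Module ℝ V] {n : ℕ}
    (v : V) (ω : V [⋀^Fin (n + 1)]→ₗ[ℝ] ℝ) : V [⋀^Fin n]→ₗ[ℝ] ℝ :=
  ω.curryLeft v

/-- `Δ(ω) = {v ∈ V : (ι_v ω) ∧ (ι_v ω) = 0}` for a 3-form `ω`. -/
noncomputable def Delta {V : Type*} [AddCommGroup V] [Module ℝ V]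
    (ω : V [⋀^Fin 3]→ₗ[ℝ] ℝ) : Set V :=
  {v | wedge (iota v ω) (iota v ω) = 0}

/-- A form is multisymplectic iff `v ↦ ι_v ω` is injective. -/
noncomputable def Multisymplectic {V : Type*} [AddCommGroup V] [Module ℝ V] {n : ℕ}
    (ω : V [⋀^Fin (n + 1)]→ₗ[ℝ] ℝ) : Prop :=
  Function.Injective fun v : V => iota v ω

/-- A complex alternating 3-form, viewed as a real alternating 3-form with complex values
on the underlying real vector space. -/
noncomputable def restrictC {W : Type*} [AddCommGroup W] [Module ℝ W] [Module ℂ W]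
    [IsScalarTower ℝ ℂ W] (γ : W [⋀^Fin 3]→ₗ[ℂ] ℂ) : W [⋀^Fin 3]→ₗ[ℝ] ℂ :=
  { γ.toMultilinearMap.restrictScalars ℝ with
    map_eq_zero_of_eq' := fun v i j h hij => γ.map_eq_zero_of_eq v h hij }

/-- `Re ∘ γ` as a real alternating 3-form on the underlying real vector space. -/
noncomputable def reForm {W : Type*} [AddCommGroup W] [Module ℝ W] [Module ℂ W]
    [IsScalarTower ℝ ℂ W] (γ : W [⋀^Fin 3]→ₗ[ℂ] ℂ) : W [⋀^Fin 3]→ₗ[ℝ] ℝ :=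
  Complex.reLm.compAlternatingMap (restrictC γ)

/-- `Im ∘ γ` as a real alternating 3-form on the underlying real vector space. -/
noncomputable def imForm {W : Type*} [AddCommGroup W] [Module ℝ W] [Module ℂ W]
    [IsScalarTower ℝ ℂ W] (γ : W [⋀^Fin 3]→ₗ[ℂ] ℂ) : W [⋀^Fin 3]→ₗ[ℝ] ℝ :=
  Complex.imLm.compAlternatingMap (restrictC γ)

/-- Key: if `γ ≠ 0` and `v ≠ 0`, then `γ(v, x, y) ≠ 0` for some `x, y`. -/
lemma key_complex {W : Type*} [AddCommGroup W] [Module ℂ W]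
    [FiniteDimensional ℂ W] (hW : Module.finrank ℂ W = 3)
    (γ : W [⋀^Fin 3]→ₗ[ℂ] ℂ) (hγ : γ ≠ 0) {v : W} (hv : v ≠ 0) :
    ∃ x y : W, γ ![v, x, y] ≠ 0 := by
  -- extend v to a basis
  have hli : LinearIndepOn ℂ id ({v} : Set W) :=
    LinearIndepOn.singleton hv
  let b := Module.Basis.extend hli
  haveI : Fintype (hli.extend (Set.subset_univ ({v} : Set W))) :=
    FiniteDimensional.fintypeBasisIndex b
  have hcard : Fintype.card (hli.extend (Set.subset_univ ({v} : Set W))) = 3 := by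
    rw [← Module.finrank_eq_card_basis b, hW]
  let e := Fintype.equivFinOfCardEq hcard
  let b' : Module.Basis (Fin 3) ℂ W := b.reindex e
  have hvmem : v ∈ hli.extend (Set.subset_univ ({v} : Set W)) :=
    hli.subset_extend _ rfl
  have hbv : b' (e ⟨v, hvmem⟩) = v := by
    simp only [b', Module.Basis.reindex_apply, Equiv.symm_apply_apply]
    exact Module.Basis.extend_apply_self hli ⟨v, hvmem⟩
  set i := e ⟨v, hvmem⟩ with hi
  -- γ b' ≠ 0
  have hγb : γ (⇑b') ≠ 0 := by
    intro h0
    apply hγ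
    rw [γ.eq_smul_basis_det b', h0, zero_smul]
  let σ : Equiv.Perm (Fin 3) := Equiv.swap 0 i
  refine ⟨b' (σ 1), b' (σ 2), ?_⟩
  have hfun : ![v, b' (σ 1), b' (σ 2)] = (⇑b') ∘ σ := by
    funext t
    fin_cases t
    · simp [σ, hbv.symm, Matrix.cons_val_zero]
    · rfl
    · rfl
  rw [hfun, γ.map_perm (⇑b') σ]
  rcases Int.units_eq_one_or σ.sign with h | h <;> simp [h, hγb]

lemma eval_reForm {W : Type*} [AddCommGroup W] [Module ℝ W] [Module ℂ W]
    [IsScalarTower ℝ ℂ W] (γ : W [⋀^Fin 3]→ₗ[ℂ] ℂ) (m : Fin 3 → W) :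
    reForm γ m = (γ m).re := rfl

lemma eval_imForm {W : Type*} [AddCommGroup W] [Module ℝ W] [Module ℂ W]
    [IsScalarTower ℝ ℂ W] (γ : W [⋀^Fin 3]→ₗ[ℂ] ℂ) (m : Fin 3 → W) :
    imForm γ m = (γ m).im := rfl

lemma update_vec {W : Type*} (d x y z : W) :
    Function.update ![d, x, y] 1 z = ![d, z, y] := by
  funext t
  fin_cases t <;> simp [Function.update]

lemma smul_entry {W : Type*} [AddCommGroup W] [Module ℂ W]
    (γ : W [⋀^Fin 3]→ₗ[ℂ] ℂ) (d x y : W) (c : ℂ) :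
    γ ![d, c • x, y] = c * γ ![d, x, y] := by
  have h1 : ![d, c • x, y] = Function.update ![d, x, y] 1 (c • x) :=
    (update_vec d x y (c • x)).symm
  have h2 : Function.update ![d, x, y] 1 x = ![d, x, y] := update_vec d x y x
  rw [h1, γ.map_update_smul, h2, smul_eq_mul]

/-- **Lemma 1.** If `γ` is a nonzero complex alternating 3-form on a 3-dimensional complex
vector space `W`, then `Re ∘ γ` and `Im ∘ γ` are multisymplectic real 3-forms on the
underlying 6-dimensional real vector space of `W`. -/
theorem reForm_imForm_multisymplectic
    {W : Type*} [AddCommGroup W] [Module ℝ W] [Module ℂ W] [IsScalarTower ℝ ℂ W]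
    [FiniteDimensional ℂ W] (hW : Module.finrank ℂ W = 3)
    (γ : W [⋀^Fin 3]→ₗ[ℂ] ℂ) (hγ : γ ≠ 0) :
    Multisymplectic (reForm γ) ∧ Multisymplectic (imForm γ) := by
  have main : ∀ d : W, (∀ x y : W, γ ![d, x, y] = 0) → d = 0 := by
    intro d hd
    by_contra hne
    obtain ⟨x, y, hxy⟩ := key_complex hW γ hγ hne
    exact hxy (hd x y)
  constructor
  · intro u w h
    have hsub : iota (u - w) (reForm γ) = 0 := by
      show (reForm γ).curryLeft (u - w) = 0
      rw [map_sub]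
      rw [sub_eq_zero]
      exact h
    have hzero : ∀ x y : W, γ ![u - w, x, y] = 0 := by
      intro x y
      have hre : ∀ x y : W, (γ ![u - w, x, y]).re = 0 := by
        intro x y
        have h0 := congrArg (fun f => f ![x, y]) hsub
        exact h0
      have h1 := hre x y
      have h2 := hre (Complex.I • x) y
      rw [smul_entry] at h2
      simp only [Complex.mul_re, Complex.I_re, Complex.I_im] at h2
      have him : (γ ![u - w, x, y]).im = 0 := by linarith
      exact Complex.ext h1 him
    exact sub_eq_zero.mp (main _ hzero)
  · intro u w h
    have hsub : iota (u - w) (imForm γ) = 0 := by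
      show (imForm γ).curryLeft (u - w) = 0
      rw [map_sub]
      rw [sub_eq_zero]
      exact h
    have hzero : ∀ x y : W, γ ![u - w, x, y] = 0 := by
      intro x y
      have him : ∀ x y : W, (γ ![u - w, x, y]).im = 0 := by
        intro x y
        have h0 := congrArg (fun f => f ![x, y]) hsub
        exact h0
      have h1 := him x y
      have h2 := him (Complex.I • x) y
      rw [smul_entry] at h2
      simp only [Complex.mul_im, Complex.I_re, Complex.I_im] at h2
      have hre : (γ ![u - w, x, y]).re = 0 := by linarith
      exact Complex.ext hre h1
    exact sub_eq_zero.mp (main _ hzero)
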